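/- (Algebraic Lemma) Let (x,y,z) be an admissible triple of real numbers satisfying x² + y² + z² − xyz > 4 and |x| ≤ 2, |y| ≤ 2, |z| ≤ 2. Then there exists an element β of the group of bijections of ℝ³ generated by β₁ and β₂ such that at least one coordinate of β(x,y,z) has absolute value strictly greater than 2. -/

import Mathlib

/-- The braid-group generator `β₁`, as a bijection of `ℝ³`. -/
def braidEquiv₁ : Equiv.Perm (ℝ × ℝ × ℝ) where
  toFun p := (-p.1, p.2.2 - p.1 * p.2.1, p.2.1)
  invFun p := (-p.1, p.2.2, p.2.1 - p.1 * p.2.2)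
  left_inv := by rintro ⟨a, b, c⟩; simp only [Prod.mk.injEq]; exact ⟨by (first | rfl | ring_nf | simp), by (first | rfl | ring_nf | simp), by (first | rfl | ring_nf | simp)⟩
  right_inv := by rintro ⟨a, b, c⟩; simp only [Prod.mk.injEq]; exact ⟨by (first | rfl | ring_nf | simp), by (first | rfl | ring_nf | simp), by (first | rfl | ring_nf | simp)⟩

/-- The braid-group generator `β₂`, as a bijection of `ℝ³`. -/
def braidEquiv₂ : Equiv.Perm (ℝ × ℝ × ℝ) where
  toFun p := (p.2.2, -p.2.1, p.1 - p.2.1 * p.2.2)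
  invFun p := (p.2.2 - p.1 * p.2.1, -p.2.1, p.1)
  left_inv := by rintro ⟨a, b, c⟩; simp only [Prod.mk.injEq]; exact ⟨by (first | rfl | ring_nf | simp), by (first | rfl | ring_nf | simp), by (first | rfl | ring_nf | simp)⟩
  right_inv := by rintro ⟨a, b, c⟩; simp only [Prod.mk.injEq]; exact ⟨by (first | rfl | ring_nf | simp), by (first | rfl | ring_nf | simp), by (first | rfl | ring_nf | simp)⟩

/-- The braid group: the group of bijections of `ℝ³` generated by `β₁` and `β₂`. -/
def braidSubgroup : Subgroup (Equiv.Perm (ℝ × ℝ × ℝ)) :=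
  Subgroup.closure {braidEquiv₁, braidEquiv₂}

/-- A triple is admissible if at most one of its coordinates equals zero. -/
def Admissible (p : ℝ × ℝ × ℝ) : Prop :=
  ¬(p.1 = 0 ∧ p.2.1 = 0) ∧ ¬(p.1 = 0 ∧ p.2.2 = 0) ∧ ¬(p.2.1 = 0 ∧ p.2.2 = 0)

/-- An admissible triple is good if every braid image of it has all coordinates of the
form `-2 cos (π r)` with `r ∈ [0,1]` rational. -/
def Good (p : ℝ × ℝ × ℝ) : Prop :=
  Admissible p ∧ ∀ g ∈ braidSubgroup, ∃ r₁ r₂ r₃ : ℚ,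
    0 ≤ r₁ ∧ r₁ ≤ 1 ∧ 0 ≤ r₂ ∧ r₂ ≤ 1 ∧ 0 ≤ r₃ ∧ r₃ ≤ 1 ∧
    g p = (-2 * Real.cos (Real.pi * r₁), -2 * Real.cos (Real.pi * r₂),
           -2 * Real.cos (Real.pi * r₃))

/-- Two triples are equivalent when one is obtained from the other by changing the signs
of exactly two of the three coordinates (or by changing no signs). -/
def TripleEquiv (p q : ℝ × ℝ × ℝ) : Prop :=
  q = p ∨ q = (p.1, -p.2.1, -p.2.2) ∨ q = (-p.1, p.2.1, -p.2.2) ∨ q = (-p.1, -p.2.1, p.2.2)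

set_option maxHeartbeats 1000000

private lemma aux_uvw (u v w : ℝ) (hu : 0 < u) (hv : 0 < v) (hw : 0 < w)
    (h1 : u*v ≤ 2*w) (h2 : u*w ≤ 2*v) (h3 : v*w ≤ 2*u)
    (bu : u ≤ 2) (bv : v ≤ 2) (bw : w ≤ 2) (hvu : v ≤ u) :
    u^2 + v^2 + w^2 - u*v*w ≤ 4 := by
  have key : u^2 * (u^2 + v^2 + w^2 - u*v*w - 4)
      = (u^2 - 4)*(u^2 - v^2) - (2*v - u*w)*(2*v + u*w - u^2*v) := by ring
  have t1 : (u^2 - 4)*(u^2 - v^2) ≤ 0 :=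
    mul_nonpos_of_nonpos_of_nonneg (by nlinarith) (by nlinarith)
  have t2 : 0 ≤ (2*v - u*w)*(2*v + u*w - u^2*v) := by
    have h4 : 0 ≤ u * (2*w - u*v) := mul_nonneg hu.le (by linarith)
    have : 0 ≤ 2*v + u*w - u^2*v := by nlinarith
    exact mul_nonneg (by linarith) this
  have hle : u^2 * (u^2 + v^2 + w^2 - u*v*w - 4) ≤ 0 := by rw [key]; linarith
  nlinarith [hle, mul_pos hu hu]

private lemma uvw_of_sq (u v w : ℝ) (hu : 0 < u) (hv : 0 < v) (hw : 0 < w)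
    (E1 : (u*v)^2 ≤ 2*(u*v*w)) (E2 : (u*w)^2 ≤ 2*(u*v*w)) (E3 : (v*w)^2 ≤ 2*(u*v*w))
    (bu2 : u^2 ≤ 4) (bv2 : v^2 ≤ 4) (bw2 : w^2 ≤ 4) :
    u^2 + v^2 + w^2 - u*v*w ≤ 4 := by
  have c1 : u*v ≤ 2*w := by
    have h' : (u*v) * (u*v) ≤ (2*w) * (u*v) := by
      calc (u*v)*(u*v) = (u*v)^2 := by ring
        _ ≤ 2*(u*v*w) := E1
        _ = (2*w)*(u*v) := by ring
    exact le_of_mul_le_mul_right h' (mul_pos hu hv)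
  have c2 : u*w ≤ 2*v := by
    have h' : (u*w) * (u*w) ≤ (2*v) * (u*w) := by
      calc (u*w)*(u*w) = (u*w)^2 := by ring
        _ ≤ 2*(u*v*w) := E2
        _ = (2*v)*(u*w) := by ring
    exact le_of_mul_le_mul_right h' (mul_pos hu hw)
  have c3 : v*w ≤ 2*u := by
    have h' : (v*w) * (v*w) ≤ (2*u) * (v*w) := by
      calc (v*w)*(v*w) = (v*w)^2 := by ring
        _ ≤ 2*(u*v*w) := E3
        _ = (2*u)*(v*w) := by ring
    exact le_of_mul_le_mul_right h' (mul_pos hv hw)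
  have bu : u ≤ 2 := by nlinarith
  have bv : v ≤ 2 := by nlinarith
  have bw : w ≤ 2 := by nlinarith
  rcases le_total v u with hvu | huv
  · exact aux_uvw u v w hu hv hw c1 c2 c3 bu bv bw hvu
  · have := aux_uvw v u w hv hu hw (by nlinarith) c3 c2 bv bu bw huv
    nlinarith [this]

private lemma key_ineq (x y z : ℝ) (h1 : (x*y - z)^2 ≤ z^2) (h2 : (x*z - y)^2 ≤ y^2)
    (h3 : (y*z - x)^2 ≤ x^2) (bx : x^2 ≤ 4) (by' : y^2 ≤ 4) (bz : z^2 ≤ 4) :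
    x^2 + y^2 + z^2 - x*y*z ≤ 4 := by
  have e1 : x^2*y^2 ≤ 2*(x*y*z) := by nlinarith [h1]
  have e2 : x^2*z^2 ≤ 2*(x*y*z) := by nlinarith [h2]
  have e3 : y^2*z^2 ≤ 2*(x*y*z) := by nlinarith [h3]
  have hs : 0 ≤ x*y*z := by nlinarith [sq_nonneg (x*y)]
  rcases hs.eq_or_lt with hz0 | hpos
  · have hxy : x*y = 0 := by
      have h4 : (x*y)^2 ≤ 0 := by nlinarith
      exact pow_eq_zero_iff (two_ne_zero) |>.mp (le_antisymm h4 (sq_nonneg _))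
    have hyz : y*z = 0 := by
      have h4 : (y*z)^2 ≤ 0 := by nlinarith
      exact pow_eq_zero_iff (two_ne_zero) |>.mp (le_antisymm h4 (sq_nonneg _))
    have hxz : x*z = 0 := by
      have h4 : (x*z)^2 ≤ 0 := by nlinarith
      exact pow_eq_zero_iff (two_ne_zero) |>.mp (le_antisymm h4 (sq_nonneg _))
    rcases mul_eq_zero.mp hxy with h|h <;> rcases mul_eq_zero.mp hxz with h2'|h2' <;>
      rcases mul_eq_zero.mp hyz with h3'|h3' <;> nlinarith
  · have hx0 : x ≠ 0 := by rintro rfl; simp at hpos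
    have hy0 : y ≠ 0 := by rintro rfl; simp at hpos
    have hz00 : z ≠ 0 := by rintro rfl; simp at hpos
    have huvw : |x| * |y| * |z| = x*y*z := by
      rw [← abs_mul, ← abs_mul]; exact abs_of_pos hpos
    have E1 : (|x| * |y|)^2 ≤ 2*(|x| * |y| * |z|) := by
      rw [mul_pow, sq_abs, sq_abs, huvw]; exact e1
    have E2 : (|x| * |z|)^2 ≤ 2*(|x| * |y| * |z|) := by
      rw [mul_pow, sq_abs, sq_abs, huvw]; exact e2
    have E3 : (|y| * |z|)^2 ≤ 2*(|x| * |y| * |z|) := by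
      rw [mul_pow, sq_abs, sq_abs, huvw]; exact e3
    have main := uvw_of_sq |x| |y| |z| (abs_pos.mpr hx0) (abs_pos.mpr hy0) (abs_pos.mpr hz00)
      E1 E2 E3 (by rw [sq_abs]; exact bx) (by rw [sq_abs]; exact by') (by rw [sq_abs]; exact bz)
    rw [sq_abs, sq_abs, sq_abs, huvw] at main
    exact main

private lemma sigma1_apply (q : ℝ × ℝ × ℝ) :
    (braidEquiv₁ * braidEquiv₂ * braidEquiv₁) q = (-q.2.1, -q.1, q.1 * q.2.1 - q.2.2) := by
  obtain ⟨a,b,c⟩ := q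
  simp only [Equiv.Perm.mul_apply, braidEquiv₁, braidEquiv₂, Equiv.coe_fn_mk, Prod.mk.injEq]
  refine ⟨trivial, by ring, by ring⟩

private lemma sigma2_apply (q : ℝ × ℝ × ℝ) :
    (braidEquiv₁ * braidEquiv₂ * (braidEquiv₁ * braidEquiv₂) *
      (braidEquiv₁ * braidEquiv₂ * braidEquiv₁) * (braidEquiv₁ * braidEquiv₂)) q
      = (q.2.2, q.1 * q.2.2 - q.2.1, q.1) := by
  obtain ⟨a,b,c⟩ := q
  simp only [Equiv.Perm.mul_apply, braidEquiv₁, braidEquiv₂, Equiv.coe_fn_mk, Prod.mk.injEq]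
  refine ⟨by ring, by ring, by ring⟩

private lemma beta2_apply (q : ℝ × ℝ × ℝ) :
    braidEquiv₂ q = (q.2.2, -q.2.1, q.1 - q.2.1 * q.2.2) := rfl

/-- **Algebraic Lemma.** If an admissible triple of real numbers satisfies
`x² + y² + z² - xyz > 4` and `|x|, |y|, |z| ≤ 2`, then some braid image of it has a
coordinate of absolute value strictly greater than `2`. -/
theorem algebraic_lemma (p : ℝ × ℝ × ℝ) (hadm : Admissible p)
    (hgt : 4 < p.1 ^ 2 + p.2.1 ^ 2 + p.2.2 ^ 2 - p.1 * p.2.1 * p.2.2)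
    (hb1 : |p.1| ≤ 2) (hb2 : |p.2.1| ≤ 2) (hb3 : |p.2.2| ≤ 2) :
    ∃ g ∈ braidSubgroup,
      2 < |(g p).1| ∨ 2 < |(g p).2.1| ∨ 2 < |(g p).2.2| := by

  by_contra hcon
  push_neg at hcon
  set O : Set (ℝ × ℝ × ℝ) := {q | ∃ g ∈ braidSubgroup, g p = q} with hO
  have hb1m : braidEquiv₁ ∈ braidSubgroup := Subgroup.subset_closure (Set.mem_insert _ _)
  have hb2m : braidEquiv₂ ∈ braidSubgroup :=
    Subgroup.subset_closure (Set.mem_insert_of_mem _ rfl)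
  set C : Set (ℝ × ℝ × ℝ) :=
    Set.Icc (-2:ℝ) 2 ×ˢ (Set.Icc (-2:ℝ) 2 ×ˢ Set.Icc (-2:ℝ) 2) with hC
  have hOsub : O ⊆ C := by
    rintro q ⟨g, hg, rfl⟩
    obtain ⟨h1, h2, h3⟩ := hcon g hg
    exact ⟨abs_le.mp h1, abs_le.mp h2, abs_le.mp h3⟩
  have hCc : IsCompact C := isCompact_Icc.prod (isCompact_Icc.prod isCompact_Icc)
  have hKsub : closure O ⊆ C := closure_minimal hOsub hCc.isClosed
  have hK : IsCompact (closure O) := hCc.of_isClosed_subset isClosed_closure hKsub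
  have hpO : p ∈ O := ⟨1, one_mem _, rfl⟩
  have hne : (closure O).Nonempty := ⟨p, subset_closure hpO⟩
  have hcont : Continuous fun r : ℝ × ℝ × ℝ => r.1^2 + r.2.1^2 + r.2.2^2 := by fun_prop
  obtain ⟨q, hqK, hqmax⟩ := hK.exists_isMaxOn hne hcont.continuousOn
  -- invariance of the closure under elements of the braid subgroup (given a continuous formula)
  have himg : ∀ g ∈ braidSubgroup, ∀ f : ℝ × ℝ × ℝ → ℝ × ℝ × ℝ, Continuous f →
      (∀ r, f r = g r) → ∀ r ∈ closure O, g r ∈ closure O := by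
    intro g hg f hf hfg r hr
    have h1 : f '' O ⊆ O := by
      rintro _ ⟨s, ⟨g', hg', rfl⟩, rfl⟩
      exact ⟨g * g', mul_mem hg hg', by rw [hfg, Equiv.Perm.mul_apply]⟩
    have h2 : f r ∈ closure (f '' O) :=
      image_closure_subset_closure_image hf (Set.mem_image_of_mem f hr)
    rw [← hfg]
    exact closure_mono h1 h2
  -- the three Vieta-type elements
  have hσ1 : braidEquiv₁ * braidEquiv₂ * braidEquiv₁ ∈ braidSubgroup :=
    mul_mem (mul_mem hb1m hb2m) hb1m
  have hσ2 : braidEquiv₁ * braidEquiv₂ * (braidEquiv₁ * braidEquiv₂) *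
      (braidEquiv₁ * braidEquiv₂ * braidEquiv₁) * (braidEquiv₁ * braidEquiv₂) ∈ braidSubgroup := by
    exact mul_mem (mul_mem (mul_mem (mul_mem hb1m hb2m) (mul_mem hb1m hb2m)) hσ1)
      (mul_mem hb1m hb2m)
  have m1 : (braidEquiv₁ * braidEquiv₂ * braidEquiv₁) q ∈ closure O :=
    himg _ hσ1 (fun r => (-r.2.1, -r.1, r.1 * r.2.1 - r.2.2)) (by fun_prop)
      (fun r => (sigma1_apply r).symm) q hqK
  have m2 : (braidEquiv₁ * braidEquiv₂ * (braidEquiv₁ * braidEquiv₂) *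
      (braidEquiv₁ * braidEquiv₂ * braidEquiv₁) * (braidEquiv₁ * braidEquiv₂)) q ∈ closure O :=
    himg _ hσ2 (fun r => (r.2.2, r.1 * r.2.2 - r.2.1, r.1)) (by fun_prop)
      (fun r => (sigma2_apply r).symm) q hqK
  have m3 : braidEquiv₂ q ∈ closure O :=
    himg _ hb2m (fun r => (r.2.2, -r.2.1, r.1 - r.2.1 * r.2.2)) (by fun_prop)
      (fun r => (beta2_apply r).symm) q hqK
  have i1 : (q.1 * q.2.1 - q.2.2)^2 ≤ q.2.2^2 := by
    have h := hqmax m1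
    rw [sigma1_apply] at h
    simp only [Set.mem_setOf_eq] at h
    nlinarith [h]
  have i2 : (q.1 * q.2.2 - q.2.1)^2 ≤ q.2.1^2 := by
    have h := hqmax m2
    rw [sigma2_apply] at h
    simp only [Set.mem_setOf_eq] at h
    nlinarith [h]
  have i3 : (q.2.1 * q.2.2 - q.1)^2 ≤ q.1^2 := by
    have h := hqmax m3
    rw [beta2_apply] at h
    simp only [Set.mem_setOf_eq] at h
    nlinarith [h]
  -- κ is invariant on the closure
  have hOk : ∀ g ∈ braidSubgroup, ∀ r : ℝ × ℝ × ℝ,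
      (g r).1^2 + (g r).2.1^2 + (g r).2.2^2 - (g r).1 * (g r).2.1 * (g r).2.2
        = r.1^2 + r.2.1^2 + r.2.2^2 - r.1 * r.2.1 * r.2.2 := by
    intro g hg
    refine Subgroup.closure_induction ?_ ?_ ?_ ?_ hg
    · intro x hx
      rcases hx with rfl | rfl
      · rintro ⟨a,b,c⟩
        simp only [braidEquiv₁, Equiv.coe_fn_mk]
        ring
      · rintro ⟨a,b,c⟩
        simp only [braidEquiv₂, Equiv.coe_fn_mk]
        ring
    · intro r; rfl
    · intro x y _ _ px py r
      rw [Equiv.Perm.mul_apply, px (y r), py r]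
    · intro x _ px r
      have h := px (x⁻¹ r)
      rw [← Equiv.Perm.mul_apply, mul_inv_cancel, Equiv.Perm.one_apply] at h
      exact h.symm
  have hKk : ∀ r ∈ closure O,
      r.1^2 + r.2.1^2 + r.2.2^2 - r.1 * r.2.1 * r.2.2
        = p.1^2 + p.2.1^2 + p.2.2^2 - p.1 * p.2.1 * p.2.2 := by
    have hsubset : O ⊆ {r : ℝ × ℝ × ℝ | r.1^2 + r.2.1^2 + r.2.2^2 - r.1 * r.2.1 * r.2.2
        = p.1^2 + p.2.1^2 + p.2.2^2 - p.1 * p.2.1 * p.2.2} := by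
      rintro _ ⟨g, hg, rfl⟩
      exact hOk g hg p
    have hclosed : IsClosed {r : ℝ × ℝ × ℝ | r.1^2 + r.2.1^2 + r.2.2^2 - r.1 * r.2.1 * r.2.2
        = p.1^2 + p.2.1^2 + p.2.2^2 - p.1 * p.2.1 * p.2.2} :=
      isClosed_eq (by fun_prop) continuous_const
    exact fun r hr => closure_minimal hsubset hclosed hr
  have hq4 : 4 < q.1^2 + q.2.1^2 + q.2.2^2 - q.1 * q.2.1 * q.2.2 := by
    rw [hKk q hqK]; exact hgt
  obtain ⟨hq1, hq2, hq3⟩ := hKsub hqK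
  have b1 : q.1^2 ≤ 4 := by nlinarith [hq1.1, hq1.2]
  have b2 : q.2.1^2 ≤ 4 := by nlinarith [hq2.1, hq2.2]
  have b3 : q.2.2^2 ≤ 4 := by nlinarith [hq3.1, hq3.2]
  have := key_ineq q.1 q.2.1 q.2.2 i1 i2 (by nlinarith [i3]) b1 b2 b3
  linarith
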